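/- Let d ≥ 1, κ ≥ 2d, and let α₁, α₂ : ℝ^{2d} → ℂ be continuously differentiable with ‖α_i‖_{A^{κ,2}} < ∞ and ‖∇_v α_i‖_{A^{κ,2}} < ∞. Define the phase densities φ_i(x) := ∫_{ℝ^d} conj(α_i)(x,v) ∇_v α_i(x,v) dv. Then sup_{x ∈ ℝ^d} |φ₁(x) − φ₂(x)| ≤ A(κ,d) (‖∇_v α₁‖_{A^{κ,2}} + ‖∇_v α₂‖_{A^{κ,2}}) ‖α₁ − α₂‖_{A^{κ,2}}, where A(κ,d) := inf_{R>0} (1+R)^κ/(ω_d R^d) and ω_d is the Lebesgue volume of the unit ball in ℝ^d. -/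

import Mathlib

open MeasureTheory Metric
open scoped ENNReal NNReal

set_option maxHeartbeats 1000000
set_option synthInstance.maxHeartbeats 400000

/-- `ℝ^d` as a Euclidean space. -/
abbrev E (d : ℕ) : Type := EuclideanSpace ℝ (Fin d)

/-- The `A^{κ,p}` norm: `sup_{R ≥ 0} (1+R)^{-κ/p} (∫ sup_{|z̄| ≤ R} ‖f(z+z̄)‖^p dz)^{1/p}`. -/
noncomputable def Anorm {G F : Type*} [NormedAddCommGroup G] [MeasureSpace G]
    [NormedAddCommGroup F] (κ p : ℝ) (f : G → F) : ℝ≥0∞ :=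
  ⨆ R : NNReal, (ENNReal.ofReal (1 + (R : ℝ))) ^ (-(κ / p)) *
    (∫⁻ z, ⨆ w ∈ Metric.closedBall (0 : G) (R : ℝ),
      ENNReal.ofReal (‖f (z + w)‖ ^ p)) ^ (1 / p)

/-- The constant `A(a,d) = inf_{R>0} (1+R)^a / (ω_d R^d)`, where `ω_d` is the Lebesgue
volume of the unit ball in `ℝ^d`. -/
noncomputable def Aconst (d : ℕ) (a : ℝ) : ℝ :=
  ⨅ R : {R : ℝ // 0 < R},
    (1 + R.1) ^ a / ((volume (Metric.ball (0 : E d) 1)).toReal * R.1 ^ (d : ℝ))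

/-- The velocity gradient `∇ᵥα` of a function on phase space, as a continuous linear map. -/
noncomputable def gradV (d : ℕ) (α : E d × E d → ℂ) (z : E d × E d) : E d →L[ℝ] ℂ :=
  fderiv ℝ (fun w : E d => α (z.1, w)) z.2

/-- The phase density `φ(x) = ∫ conj(α)(x,v) ∇ᵥα(x,v) dv`. -/
noncomputable def phaseDensity (d : ℕ) (α : E d × E d → ℂ) (x : E d) : E d →L[ℝ] ℂ :=
  ∫ v : E d, (starRingEnd ℂ) (α (x, v)) • gradV d α (x, v)

section Aux

open Metric

variable {d : ℕ}

instance : Nonempty {R : ℝ // 0 < R} := ⟨⟨1, one_pos⟩⟩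

private lemma contDiff_slice {α : E d × E d → ℂ} (hα : ContDiff ℝ 1 α) (x : E d) :
    ContDiff ℝ 1 (fun v : E d => α (x, v)) :=
  hα.comp (contDiff_const.prodMk contDiff_id)

private lemma gradV_hasFDerivAt {α : E d × E d → ℂ} (hα : ContDiff ℝ 1 α) (x v : E d) :
    HasFDerivAt (fun w : E d => α (x, w)) (gradV d α (x, v)) v := by
  have h := ((hα.differentiable one_ne_zero) (x, v)).hasFDerivAt.comp v
    (hasFDerivAt_prodMk_right x v)
  have h2 : gradV d α (x, v)
      = (fderiv ℝ α (x, v)).comp (ContinuousLinearMap.inr ℝ (E d) (E d)) := h.fderiv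
  rw [h2]; exact h

private lemma gradV_continuous {α : E d × E d → ℂ} (hα : ContDiff ℝ 1 α) :
    Continuous (gradV d α) := by
  have h : gradV d α
      = fun z => (fderiv ℝ α z).comp (ContinuousLinearMap.inr ℝ (E d) (E d)) := by
    funext z
    exact (((hα.differentiable one_ne_zero) z).hasFDerivAt.comp z.2
      (hasFDerivAt_prodMk_right z.1 z.2)).fderiv
  rw [h]
  exact (hα.continuous_fderiv one_ne_zero).clm_comp continuous_const

private lemma gradV_sub {α₁ α₂ : E d × E d → ℂ} (h₁ : ContDiff ℝ 1 α₁) (h₂ : ContDiff ℝ 1 α₂)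
    (x v : E d) :
    gradV d (α₁ - α₂) (x, v) = gradV d α₁ (x, v) - gradV d α₂ (x, v) := by
  have h0 : gradV d (α₁ - α₂) (x, v)
      = fderiv ℝ (fun w : E d => α₁ (x, w) - α₂ (x, w)) v := rfl
  rw [h0]
  exact ((gradV_hasFDerivAt h₁ x v).sub (gradV_hasFDerivAt h₂ x v)).fderiv

/-- The main averaging estimate: for any radius `R`,
`ω_d R^d ∫ |f(x,v)|² dv ≤ (1+R)^κ ‖f‖²`. -/
private lemma lemA {F : Type*} [NormedAddCommGroup F] {κ : ℝ} {f : E d × E d → F}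
    (hf : Continuous f) (x : E d) (R : ℝ≥0) :
    volume (ball (0 : E d) (R : ℝ)) * ∫⁻ v, ENNReal.ofReal (‖f (x, v)‖ ^ (2 : ℝ)) ≤
      ENNReal.ofReal (1 + (R : ℝ)) ^ κ * Anorm κ 2 f ^ (2 : ℝ) := by
  set S : E d × E d → ℝ≥0∞ := fun z =>
    ⨆ w ∈ closedBall (0 : E d × E d) (R : ℝ), ENNReal.ofReal (‖f (z + w)‖ ^ (2 : ℝ)) with hS
  have hcont : ∀ w : E d × E d,
      Continuous fun z : E d × E d => ENNReal.ofReal (‖f (z + w)‖ ^ (2 : ℝ)) := by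
    intro w
    exact ENNReal.continuous_ofReal.comp
      (((hf.comp (continuous_id.add continuous_const)).norm).rpow_const
        fun z => Or.inr (by norm_num))
  have hSm : Measurable S := by
    apply LowerSemicontinuous.measurable
    apply lowerSemicontinuous_iSup
    intro w
    apply lowerSemicontinuous_iSup
    intro _
    exact (hcont w).lowerSemicontinuous
  have key1 : ∀ y ∈ ball (0 : E d) (R : ℝ), ∀ v : E d,
      ENNReal.ofReal (‖f (x, v)‖ ^ (2 : ℝ)) ≤ S (x - y, v) := by
    intro y hy v
    have hmem : ((y, (0 : E d)) : E d × E d) ∈ closedBall (0 : E d × E d) (R : ℝ) := by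
      have : ((y, (0 : E d)) : E d × E d) ∈
          closedBall (0 : E d) (R : ℝ) ×ˢ closedBall (0 : E d) (R : ℝ) :=
        Set.mk_mem_prod (ball_subset_closedBall hy) (mem_closedBall_self R.2)
      rwa [closedBall_prod_same] at this
    have h := le_biSup
      (f := fun w : E d × E d => ENNReal.ofReal (‖f (((x - y, v) : E d × E d) + w)‖ ^ (2 : ℝ)))
      hmem
    have he : ((x - y, v) : E d × E d) + (y, (0 : E d)) = (x, v) := by
      simp [Prod.ext_iff]
    have h' : ENNReal.ofReal (‖f ((x - y, v) + (y, (0 : E d)))‖ ^ (2 : ℝ)) ≤ S (x - y, v) := h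
    rwa [he] at h' 
  have hT : Measurable fun y : E d => ∫⁻ v, S (y, v) := by
    apply Measurable.lintegral_prod_right'
    exact hSm
  calc volume (ball (0 : E d) (R : ℝ)) * ∫⁻ v, ENNReal.ofReal (‖f (x, v)‖ ^ (2 : ℝ))
      = ∫⁻ _ in ball (0 : E d) (R : ℝ), (∫⁻ v, ENNReal.ofReal (‖f (x, v)‖ ^ (2 : ℝ))) := by
        rw [setLIntegral_const, mul_comm]
    _ ≤ ∫⁻ y in ball (0 : E d) (R : ℝ), ∫⁻ v, S (x - y, v) := by
        apply setLIntegral_mono' measurableSet_ball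
        intro y hy
        exact lintegral_mono fun v => key1 y hy v
    _ ≤ ∫⁻ y, ∫⁻ v, S (x - y, v) := setLIntegral_le_lintegral _ _
    _ = ∫⁻ y, ∫⁻ v, S (y, v) := by
        have hcoe : ⇑(MeasurableEquiv.subLeft x) = fun t : E d => x - t := rfl
        have h1 := lintegral_map_equiv (μ := (volume : Measure (E d)))
          (fun y => ∫⁻ v, S (y, v)) (MeasurableEquiv.subLeft x)
        rw [hcoe, Measure.map_sub_left_eq_self volume x] at h1
        exact h1.symm
    _ = ∫⁻ z, S z := by
        rw [show (volume : Measure (E d × E d)) = (volume : Measure (E d)).prod volume from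
          Measure.volume_eq_prod _ _, lintegral_prod _ hSm.aemeasurable]
    _ ≤ ENNReal.ofReal (1 + (R : ℝ)) ^ κ * Anorm κ 2 f ^ (2 : ℝ) := by
        have hc0 : ENNReal.ofReal (1 + (R : ℝ)) ≠ 0 := by
          simp only [ne_eq, ENNReal.ofReal_eq_zero, not_le]
          positivity
        have hctop : ENNReal.ofReal (1 + (R : ℝ)) ≠ ⊤ := ENNReal.ofReal_ne_top
        have hle : ENNReal.ofReal (1 + (R : ℝ)) ^ (-(κ / 2)) * (∫⁻ z, S z) ^ (1 / (2 : ℝ))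
            ≤ Anorm κ 2 f := by
          rw [Anorm]
          exact le_iSup (fun R' : ℝ≥0 => ENNReal.ofReal (1 + (R' : ℝ)) ^ (-(κ / 2)) *
            (∫⁻ z, ⨆ w ∈ closedBall (0 : E d × E d) (R' : ℝ),
              ENNReal.ofReal (‖f (z + w)‖ ^ (2 : ℝ))) ^ (1 / (2 : ℝ))) R
        have h2 : (∫⁻ z, S z) ^ (1 / (2 : ℝ))
            ≤ ENNReal.ofReal (1 + (R : ℝ)) ^ (κ / 2) * Anorm κ 2 f := by
          calc (∫⁻ z, S z) ^ (1 / (2 : ℝ))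
              = ENNReal.ofReal (1 + (R : ℝ)) ^ (κ / 2) *
                (ENNReal.ofReal (1 + (R : ℝ)) ^ (-(κ / 2)) * (∫⁻ z, S z) ^ (1 / (2 : ℝ))) := by
                rw [← mul_assoc, ← ENNReal.rpow_add _ _ hc0 hctop]
                simp
            _ ≤ _ := mul_le_mul_right hle _
        have h3 := ENNReal.rpow_le_rpow h2 (by norm_num : (0 : ℝ) ≤ 2)
        rw [← ENNReal.rpow_mul, one_div, inv_mul_cancel₀ (two_ne_zero), ENNReal.rpow_one,
          ENNReal.mul_rpow_of_nonneg _ _ (by norm_num : (0 : ℝ) ≤ 2),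
          ← ENNReal.rpow_mul, div_mul_cancel₀ _ (two_ne_zero)] at h3
        exact h3

private lemma lemA_fin {F : Type*} [NormedAddCommGroup F] {κ : ℝ} (hκ0 : 0 ≤ κ)
    {f : E d × E d → F} (hf : Continuous f) (hA : Anorm κ 2 f < ⊤) (x : E d) :
    ∫⁻ v, ENNReal.ofReal (‖f (x, v)‖ ^ (2 : ℝ)) ≠ ⊤ := by
  intro htop
  have h := lemA (κ := κ) hf x 1
  rw [htop] at h
  have hvol : volume (ball (0 : E d) ((1 : ℝ≥0) : ℝ)) ≠ 0 :=
    (measure_ball_pos _ _ (by norm_num)).ne'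
  rw [ENNReal.mul_top hvol] at h
  have hfin : ENNReal.ofReal (1 + ((1 : ℝ≥0) : ℝ)) ^ κ * Anorm κ 2 f ^ (2 : ℝ) < ⊤ :=
    ENNReal.mul_lt_top (ENNReal.rpow_lt_top_of_nonneg hκ0 ENNReal.ofReal_ne_top)
      (ENNReal.rpow_lt_top_of_nonneg (by norm_num) hA.ne)
  exact absurd (lt_of_le_of_lt h hfin) (lt_irrefl _)

private lemma CSbound {F : Type*} [NormedAddCommGroup F] (φ : E d → F) (a b : E d → ℝ)
    (ha : Continuous a) (hb : Continuous b) (ha0 : ∀ v, 0 ≤ a v) (hb0 : ∀ v, 0 ≤ b v)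
    (hbound : ∀ v, ‖φ v‖ ≤ a v * b v) :
    ∫⁻ v, (‖φ v‖₊ : ℝ≥0∞) ≤
      (∫⁻ v, ENNReal.ofReal (a v ^ (2 : ℝ))) ^ (1 / (2 : ℝ)) *
        (∫⁻ v, ENNReal.ofReal (b v ^ (2 : ℝ))) ^ (1 / (2 : ℝ)) := by
  have step1 : ∫⁻ v, (‖φ v‖₊ : ℝ≥0∞) ≤
      ∫⁻ v, ENNReal.ofReal (a v) * ENNReal.ofReal (b v) := by
    apply lintegral_mono
    intro v
    show (‖φ v‖₊ : ℝ≥0∞) ≤ ENNReal.ofReal (a v) * ENNReal.ofReal (b v)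
    rw [← ENNReal.ofReal_mul (ha0 v), ← enorm_eq_nnnorm, ← ofReal_norm]
    exact ENNReal.ofReal_le_ofReal (hbound v)
  have hpq : Real.HolderConjugate 2 2 := Real.HolderConjugate.two_two
  have step2 := ENNReal.lintegral_mul_le_Lp_mul_Lq volume hpq
    (ENNReal.measurable_ofReal.comp ha.measurable).aemeasurable
    (ENNReal.measurable_ofReal.comp hb.measurable).aemeasurable
  simp only [Pi.mul_apply, Function.comp] at step2
  have e2 : (∫⁻ v, ENNReal.ofReal (a v) ^ (2 : ℝ)) = ∫⁻ v, ENNReal.ofReal (a v ^ (2 : ℝ)) :=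
    lintegral_congr fun v => ENNReal.ofReal_rpow_of_nonneg (ha0 v) (by norm_num)
  have e3 : (∫⁻ v, ENNReal.ofReal (b v) ^ (2 : ℝ)) = ∫⁻ v, ENNReal.ofReal (b v ^ (2 : ℝ)) :=
    lintegral_congr fun v => ENNReal.ofReal_rpow_of_nonneg (hb0 v) (by norm_num)
  rw [e2, e3] at step2
  exact le_trans step1 step2

private lemma CSnorm {F : Type*} [NormedAddCommGroup F] [NormedSpace ℝ F] (φ : E d → F)
    (a b : E d → ℝ) (ha : Continuous a) (hb : Continuous b)
    (ha0 : ∀ v, 0 ≤ a v) (hb0 : ∀ v, 0 ≤ b v) (hbound : ∀ v, ‖φ v‖ ≤ a v * b v) :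
    ENNReal.ofReal ‖∫ v, φ v‖ ≤
      (∫⁻ v, ENNReal.ofReal (a v ^ (2 : ℝ))) ^ (1 / (2 : ℝ)) *
        (∫⁻ v, ENNReal.ofReal (b v ^ (2 : ℝ))) ^ (1 / (2 : ℝ)) := by
  calc ENNReal.ofReal ‖∫ v, φ v‖ = (‖∫ v, φ v‖₊ : ℝ≥0∞) := ofReal_norm _
    _ ≤ ∫⁻ v, (‖φ v‖₊ : ℝ≥0∞) := enorm_integral_le_lintegral_enorm _
    _ ≤ _ := CSbound φ a b ha hb ha0 hb0 hbound

private lemma CSint {F : Type*} [NormedAddCommGroup F] (φ : E d → F) (hφ : Continuous φ)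
    (a b : E d → ℝ) (ha : Continuous a) (hb : Continuous b)
    (ha0 : ∀ v, 0 ≤ a v) (hb0 : ∀ v, 0 ≤ b v) (hbound : ∀ v, ‖φ v‖ ≤ a v * b v)
    (hfa : ∫⁻ v, ENNReal.ofReal (a v ^ (2 : ℝ)) ≠ ⊤)
    (hfb : ∫⁻ v, ENNReal.ofReal (b v ^ (2 : ℝ)) ≠ ⊤) :
    Integrable φ := by
  refine ⟨hφ.aestronglyMeasurable, ?_⟩
  have h := CSbound φ a b ha hb ha0 hb0 hbound
  refine lt_of_le_of_lt h ?_
  exact ENNReal.mul_lt_top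
    (ENNReal.rpow_lt_top_of_nonneg (by norm_num) hfa)
    (ENNReal.rpow_lt_top_of_nonneg (by norm_num) hfb)

private lemma ibp_zero (h : E d → ℂ) (hh : ContDiff ℝ 1 h)
    (h1 : Integrable h) (h2 : Integrable (fun v => fderiv ℝ h v)) :
    ∫ v, fderiv ℝ h v = (0 : E d →L[ℝ] ℂ) := by
  have hder : Continuous fun v => fderiv ℝ h v := hh.continuous_fderiv one_ne_zero
  apply ContinuousLinearMap.ext
  intro e
  rw [ContinuousLinearMap.zero_apply, ContinuousLinearMap.integral_apply h2 e]
  set G : E d → ℂ := fun z => (fderiv ℝ h z) e with hG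
  have hGc : Continuous G := hder.clm_apply continuous_const
  -- FTC along the direction e
  have step1 : ∀ z : E d, h (z + e) - h z = ∫ s in (0:ℝ)..1, G (z + s • e) := by
    intro z
    have hderiv : ∀ s ∈ Set.uIcc (0:ℝ) 1,
        HasDerivAt (fun t : ℝ => h (z + t • e)) (G (z + s • e)) s := by
      intro s _
      have hline : HasDerivAt (fun t : ℝ => z + t • e) e s := by
        simpa using ((hasDerivAt_id s).smul_const e).const_add z
      exact ((hh.differentiable one_ne_zero) _).hasFDerivAt.comp_hasDerivAt s hline
    have hint : IntervalIntegrable (fun s : ℝ => G (z + s • e)) volume 0 1 :=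
      (hGc.comp (continuous_const.add (continuous_id.smul continuous_const))).intervalIntegrable 0 1
    rw [intervalIntegral.integral_eq_sub_of_hasDerivAt hderiv hint]
    simp
  have step2 : (∫ z : E d, (h (z + e) - h z)) = 0 := by
    rw [integral_sub (h1.comp_add_right e) h1, integral_add_right_eq_self h e, sub_self]
  -- Fubini
  have hΦc : Continuous fun p : E d × ℝ => G (p.1 + p.2 • e) :=
    hGc.comp (continuous_fst.add (continuous_snd.smul continuous_const))
  have hΦint : Integrable (Function.uncurry fun z (s : ℝ) => G (z + s • e))
      ((volume : Measure (E d)).prod (volume.restrict (Set.Ioc (0:ℝ) 1))) := by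
    refine ⟨hΦc.aestronglyMeasurable, ?_⟩
    show (∫⁻ p : E d × ℝ, (‖G (p.1 + p.2 • e)‖₊ : ℝ≥0∞)
      ∂((volume : Measure (E d)).prod (volume.restrict (Set.Ioc (0:ℝ) 1)))) < ⊤
    rw [lintegral_prod_symm (fun p : E d × ℝ => (‖G (p.1 + p.2 • e)‖₊ : ℝ≥0∞)) hΦc.measurable.enorm.aemeasurable]
    have hinner : ∀ s : ℝ, (∫⁻ z : E d, (‖G (z + s • e)‖₊ : ℝ≥0∞))
        = ∫⁻ z : E d, (‖G z‖₊ : ℝ≥0∞) := fun s =>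
      lintegral_add_right_eq_self (fun z => (‖G z‖₊ : ℝ≥0∞)) (s • e)
    simp_rw [hinner]
    rw [setLIntegral_const]
    have hGint : Integrable G := by
      apply (h2.norm.mul_const ‖e‖).mono' hGc.aestronglyMeasurable
      exact Filter.Eventually.of_forall fun z => (fderiv ℝ h z).le_opNorm e
    exact ENNReal.mul_lt_top hGint.2 (by simp)
  have swap := integral_integral_swap hΦint
  have lhs0 : (∫ z : E d, ∫ s in Set.Ioc (0:ℝ) 1, G (z + s • e)) = 0 := by
    have he : ∀ z : E d, (∫ s in Set.Ioc (0:ℝ) 1, G (z + s • e)) = h (z + e) - h z := by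
      intro z
      rw [← intervalIntegral.integral_of_le zero_le_one, ← step1 z]
    simp_rw [he]
    exact step2
  have rhs : (∫ s in Set.Ioc (0:ℝ) 1, ∫ z : E d, G (z + s • e)) = ∫ z, G z := by
    have he2 : ∀ s : ℝ, (∫ z : E d, G (z + s • e)) = ∫ z, G z := fun s =>
      integral_add_right_eq_self G (s • e)
    simp_rw [he2]
    simp
  have : (∫ z, G z) = 0 := by rw [← rhs, ← swap]; exact lhs0
  exact this

private lemma Aconst_pos {d : ℕ} (hd : 1 ≤ d) {κ : ℝ} (hκ : 2 * (d : ℝ) ≤ κ) :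
    0 < Aconst d κ := by
  set ω : ℝ := (volume (ball (0 : E d) 1)).toReal with hω
  have hω0 : 0 < ω :=
    ENNReal.toReal_pos (measure_ball_pos _ _ one_pos).ne' measure_ball_lt_top.ne
  have hdκ : (d : ℝ) ≤ κ := by
    have : (0:ℝ) ≤ (d:ℝ) := Nat.cast_nonneg d
    linarith
  have hbound : ∀ r : {R : ℝ // 0 < R}, 1 / ω ≤
      (1 + r.1) ^ κ / (ω * r.1 ^ (d : ℝ)) := by
    intro r
    have hr0 : 0 < r.1 := r.2
    have h1 : r.1 ^ (d : ℝ) ≤ (1 + r.1) ^ κ := by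
      calc r.1 ^ (d : ℝ) ≤ (1 + r.1) ^ (d : ℝ) :=
            Real.rpow_le_rpow hr0.le (by linarith) (Nat.cast_nonneg d)
        _ ≤ (1 + r.1) ^ κ :=
            Real.rpow_le_rpow_of_exponent_le (by linarith) hdκ
    have hrd : 0 < r.1 ^ (d : ℝ) := Real.rpow_pos_of_pos hr0 _
    rw [div_le_div_iff₀ hω0 (by positivity)]
    calc 1 * (ω * r.1 ^ (d : ℝ)) = r.1 ^ (d : ℝ) * ω := by ring
      _ ≤ (1 + r.1) ^ κ * ω := by
          apply mul_le_mul_of_nonneg_right h1 hω0.le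
  have : 1 / ω ≤ Aconst d κ := le_ciInf hbound
  exact lt_of_lt_of_le (by positivity) this

private lemma cont_ofReal_sq {F : Type*} [NormedAddCommGroup F] {f : E d → F}
    (hf : Continuous f) : Continuous fun v => ENNReal.ofReal (‖f v‖ ^ (2 : ℝ)) :=
  ENNReal.continuous_ofReal.comp ((hf.norm).rpow_const fun _ => Or.inr (by norm_num))

private lemma sq_bound {ac bc cc : ℝ} (h : ac ≤ bc + cc) (ha : 0 ≤ ac) (hb : 0 ≤ bc)
    (hc : 0 ≤ cc) : ac ^ (2 : ℝ) ≤ 2 * bc ^ (2 : ℝ) + 2 * cc ^ (2 : ℝ) := by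
  have e : ∀ t : ℝ, t ^ (2 : ℝ) = t * t := fun t => by
    rw [show (2 : ℝ) = ((2 : ℕ) : ℝ) by norm_num, Real.rpow_natCast]; ring
  rw [e, e, e]; nlinarith [mul_le_mul h h ha (by linarith : (0:ℝ) ≤ bc + cc), mul_nonneg hb hc, sq_nonneg (bc - cc)]

private lemma norm_csmul (c : ℂ) (T : E d →L[ℝ] ℂ) : ‖c • T‖ = ‖c‖ * ‖T‖ := norm_smul c T

private lemma csmul_zero (c : ℂ) : c • (0 : E d →L[ℝ] ℂ) = 0 := by
  ext u
  simp

private lemma conj_comp_norm (T : E d →L[ℝ] ℂ) :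
    ‖(Complex.conjCLE.toContinuousLinearMap).comp T‖ ≤ ‖T‖ := by
  apply ContinuousLinearMap.opNorm_le_bound _ (norm_nonneg T)
  intro u
  rw [ContinuousLinearMap.comp_apply]
  have he : ‖Complex.conjCLE.toContinuousLinearMap (T u)‖ = ‖T u‖ := by
    simp [Complex.conjCLE_apply]
  rw [he]
  exact T.le_opNorm u

end Aux

/-- Pointwise Lipschitz estimate for the phase density:
`|φ₁(x) − φ₂(x)| ≤ A(κ,d)(‖∇ᵥα₁‖_{A^{κ,2}} + ‖∇ᵥα₂‖_{A^{κ,2}}) ‖α₁ − α₂‖_{A^{κ,2}}`. -/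
theorem statement15 (d : ℕ) (hd : 1 ≤ d) (κ : ℝ) (hκ : 2 * (d : ℝ) ≤ κ)
    (α₁ α₂ : E d × E d → ℂ) (hs₁ : ContDiff ℝ 1 α₁) (hs₂ : ContDiff ℝ 1 α₂)
    (hf₁ : Anorm κ 2 α₁ < ⊤) (hf₂ : Anorm κ 2 α₂ < ⊤)
    (hg₁ : Anorm κ 2 (gradV d α₁) < ⊤) (hg₂ : Anorm κ 2 (gradV d α₂) < ⊤)
    (x : E d) :
    ENNReal.ofReal ‖phaseDensity d α₁ x - phaseDensity d α₂ x‖ ≤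
      ENNReal.ofReal (Aconst d κ) * (Anorm κ 2 (gradV d α₁) + Anorm κ 2 (gradV d α₂)) *
        Anorm κ 2 (α₁ - α₂) := by
  classical
  have hd0 : (0 : ℝ) ≤ (d : ℝ) := Nat.cast_nonneg d
  have hκ0 : (0 : ℝ) ≤ κ := by linarith
  have hcα₁ : Continuous α₁ := hs₁.continuous
  have hcα₂ : Continuous α₂ := hs₂.continuous
  have hβ : ContDiff ℝ 1 (α₁ - α₂) := hs₁.sub hs₂
  have hcβ : Continuous (α₁ - α₂) := hβ.continuous
  have hcg₁ : Continuous (gradV d α₁) := gradV_continuous hs₁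
  have hcg₂ : Continuous (gradV d α₂) := gradV_continuous hs₂
  have hcgβ : Continuous (gradV d (α₁ - α₂)) := gradV_continuous hβ
  by_cases hzero : Anorm κ 2 (gradV d α₁) = 0 ∧ Anorm κ 2 (gradV d α₂) = 0
  · -- degenerate case : both velocity gradients vanish identically in v for our x
    have hv : ∀ (αi : E d × E d → ℂ), ContDiff ℝ 1 αi → Anorm κ 2 (gradV d αi) = 0 →
        phaseDensity d αi x = 0 := by
      intro αi hsi hzi
      have h := lemA (κ := κ) (gradV_continuous hsi) x 1
      rw [hzi, ENNReal.zero_rpow_of_pos (by norm_num), mul_zero, nonpos_iff_eq_zero,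
        mul_eq_zero] at h
      have hvol : volume (Metric.ball (0 : E d) ((1 : ℝ≥0) : ℝ)) ≠ 0 :=
        (measure_ball_pos _ _ (by norm_num)).ne'
      have hI : (∫⁻ v, ENNReal.ofReal (‖gradV d αi (x, v)‖ ^ (2 : ℝ))) = 0 :=
        h.resolve_left hvol
      have hmeas : Measurable fun v : E d =>
          ENNReal.ofReal (‖gradV d αi (x, v)‖ ^ (2 : ℝ)) :=
        (cont_ofReal_sq ((gradV_continuous hsi).comp (Continuous.prodMk_right x))).measurable
      rw [lintegral_eq_zero_iff hmeas] at hI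
      have hgc : Continuous fun v : E d => gradV d αi (x, v) :=
        (gradV_continuous hsi).comp (Continuous.prodMk_right x)
      have hptwise : (fun v : E d => gradV d αi (x, v)) = fun _ => 0 := by
        rw [← Continuous.ae_eq_iff_eq volume hgc continuous_const]
        filter_upwards [hI] with v hv0
        simp only [Pi.zero_apply, ENNReal.ofReal_eq_zero] at hv0
        by_contra hTne
        have hpos : 0 < ‖gradV d αi (x, v)‖ := norm_pos_iff.mpr hTne
        have := Real.rpow_pos_of_pos hpos (2 : ℝ)
        linarith
      have hint0 : (fun v : E d => (starRingEnd ℂ) (αi (x, v)) • gradV d αi (x, v))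
          = fun _ => (0 : E d →L[ℝ] ℂ) := by
        funext v
        rw [congrFun hptwise v]
        exact csmul_zero _
      rw [phaseDensity, hint0, integral_zero]
    rw [hv α₁ hs₁ hzero.1, hv α₂ hs₂ hzero.2, sub_zero, norm_zero, ENNReal.ofReal_zero]
    exact zero_le
  · by_cases hβtop : Anorm κ 2 (α₁ - α₂) = ⊤
    · -- RHS is infinite
      have hne : Anorm κ 2 (gradV d α₁) + Anorm κ 2 (gradV d α₂) ≠ 0 := by
        intro h0
        rw [add_eq_zero] at h0
        exact hzero h0
      have hA0 : ENNReal.ofReal (Aconst d κ) ≠ 0 := by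
        simp only [ne_eq, ENNReal.ofReal_eq_zero, not_le]
        exact Aconst_pos hd hκ
      rw [hβtop, ENNReal.mul_top (mul_ne_zero hA0 hne)]
      exact le_top
    · -- main case
      have Fβ := lemA_fin hκ0 hcβ (lt_top_iff_ne_top.mpr hβtop) x
      have Fα₁ := lemA_fin hκ0 hcα₁ hf₁ x
      have Fα₂ := lemA_fin hκ0 hcα₂ hf₂ x
      have Fg₁ := lemA_fin hκ0 hcg₁ hg₁ x
      have Fg₂ := lemA_fin hκ0 hcg₂ hg₂ x
      have Fgβ : (∫⁻ v, ENNReal.ofReal (‖gradV d (α₁ - α₂) (x, v)‖ ^ (2 : ℝ))) ≠ ⊤ := by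
        have hpt : ∀ v : E d, ENNReal.ofReal (‖gradV d (α₁ - α₂) (x, v)‖ ^ (2 : ℝ)) ≤
            2 * ENNReal.ofReal (‖gradV d α₁ (x, v)‖ ^ (2 : ℝ)) +
              2 * ENNReal.ofReal (‖gradV d α₂ (x, v)‖ ^ (2 : ℝ)) := by
          intro v
          have hsub := gradV_sub hs₁ hs₂ x v
          have hb : ‖gradV d (α₁ - α₂) (x, v)‖ ≤
              ‖gradV d α₁ (x, v)‖ + ‖gradV d α₂ (x, v)‖ := by
            rw [hsub]; exact norm_sub_le _ _
          have h2 := sq_bound hb (norm_nonneg _) (norm_nonneg _) (norm_nonneg _)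
          calc ENNReal.ofReal (‖gradV d (α₁ - α₂) (x, v)‖ ^ (2 : ℝ))
              ≤ ENNReal.ofReal (2 * ‖gradV d α₁ (x, v)‖ ^ (2 : ℝ) +
                  2 * ‖gradV d α₂ (x, v)‖ ^ (2 : ℝ)) := ENNReal.ofReal_le_ofReal h2
            _ = _ := by
                rw [ENNReal.ofReal_add (by positivity) (by positivity),
                  ENNReal.ofReal_mul (by norm_num), ENNReal.ofReal_mul (by norm_num)]
                norm_num
        have hle := lintegral_mono (μ := (volume : Measure (E d))) hpt
        have hmeas₁ : Measurable fun v : E d =>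
            ENNReal.ofReal (‖gradV d α₁ (x, v)‖ ^ (2 : ℝ)) :=
          (cont_ofReal_sq (hcg₁.comp (Continuous.prodMk_right x))).measurable
        have hmeas₂ : Measurable fun v : E d =>
            ENNReal.ofReal (‖gradV d α₂ (x, v)‖ ^ (2 : ℝ)) :=
          (cont_ofReal_sq (hcg₂.comp (Continuous.prodMk_right x))).measurable
        rw [lintegral_add_left (hmeas₁.const_mul 2), lintegral_const_mul 2 hmeas₁,
          lintegral_const_mul 2 hmeas₂] at hle
        have hrhs : 2 * (∫⁻ v, ENNReal.ofReal (‖gradV d α₁ (x, v)‖ ^ (2 : ℝ))) +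
            2 * (∫⁻ v, ENNReal.ofReal (‖gradV d α₂ (x, v)‖ ^ (2 : ℝ))) ≠ ⊤ :=
          ENNReal.add_ne_top.mpr
            ⟨ENNReal.mul_ne_top (by norm_num) Fg₁, ENNReal.mul_ne_top (by norm_num) Fg₂⟩
        exact ne_top_of_le_ne_top hrhs hle
      -- the relevant integrands
      have happly : ∀ z : ℂ, Complex.conjCLE.toContinuousLinearMap z = (starRingEnd ℂ) z := fun z => rfl
      set P : E d → (E d →L[ℝ] ℂ) :=
        fun v => (starRingEnd ℂ) ((α₁ - α₂) (x, v)) • gradV d α₁ (x, v) with hP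
      set Q : E d → (E d →L[ℝ] ℂ) :=
        fun v => (starRingEnd ℂ) (α₂ (x, v)) • gradV d (α₁ - α₂) (x, v) with hQ
      set Cc : E d → (E d →L[ℝ] ℂ) :=
        fun v => (α₁ - α₂) (x, v) • (Complex.conjCLE.toContinuousLinearMap.comp (gradV d α₂ (x, v))) with hCc
      have hconjc : Continuous fun z : ℂ => (starRingEnd ℂ) z := by
        simp only [← happly]
        exact Complex.conjCLE.toContinuousLinearMap.continuous
      -- continuities
      have hcP : Continuous P :=
        ((hconjc.comp (hcβ.comp (Continuous.prodMk_right x))).smul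
          (hcg₁.comp (Continuous.prodMk_right x)))
      have hcQ : Continuous Q :=
        ((hconjc.comp (hcα₂.comp (Continuous.prodMk_right x))).smul
          (hcgβ.comp (Continuous.prodMk_right x)))
      have hcCc : Continuous Cc :=
        ((hcβ.comp (Continuous.prodMk_right x)).smul
          ((continuous_const.clm_comp (hcg₂.comp (Continuous.prodMk_right x)))))
      have hcA₁ : Continuous fun v : E d => (starRingEnd ℂ) (α₁ (x, v)) • gradV d α₁ (x, v) :=
        ((hconjc.comp (hcα₁.comp (Continuous.prodMk_right x))).smul
          (hcg₁.comp (Continuous.prodMk_right x)))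
      have hcA₂ : Continuous fun v : E d => (starRingEnd ℂ) (α₂ (x, v)) • gradV d α₂ (x, v) :=
        ((hconjc.comp (hcα₂.comp (Continuous.prodMk_right x))).smul
          (hcg₂.comp (Continuous.prodMk_right x)))
      -- integrabilities
      have normconj : ∀ z : ℂ, ‖(starRingEnd ℂ) z‖ = ‖z‖ := fun z => RCLike.norm_conj z
      have intP : Integrable P := by
        apply CSint P hcP (fun v => ‖(α₁ - α₂) (x, v)‖) (fun v => ‖gradV d α₁ (x, v)‖)
          ((hcβ.comp (Continuous.prodMk_right x)).norm) ((hcg₁.comp (Continuous.prodMk_right x)).norm)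
          (fun v => norm_nonneg _) (fun v => norm_nonneg _) _ Fβ Fg₁
        intro v
        show ‖(starRingEnd ℂ) _ • _‖ ≤ _
        rw [norm_csmul, normconj]
      have intQ : Integrable Q := by
        apply CSint Q hcQ (fun v => ‖α₂ (x, v)‖) (fun v => ‖gradV d (α₁ - α₂) (x, v)‖)
          ((hcα₂.comp (Continuous.prodMk_right x)).norm) ((hcgβ.comp (Continuous.prodMk_right x)).norm)
          (fun v => norm_nonneg _) (fun v => norm_nonneg _) _ Fα₂ Fgβ
        intro v
        show ‖(starRingEnd ℂ) _ • _‖ ≤ _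
        rw [norm_csmul, normconj]
      have intCc : Integrable Cc := by
        apply CSint Cc hcCc (fun v => ‖(α₁ - α₂) (x, v)‖) (fun v => ‖gradV d α₂ (x, v)‖)
          ((hcβ.comp (Continuous.prodMk_right x)).norm) ((hcg₂.comp (Continuous.prodMk_right x)).norm)
          (fun v => norm_nonneg _) (fun v => norm_nonneg _) _ Fβ Fg₂
        intro v
        show ‖(α₁ - α₂) (x, v) • (Complex.conjCLE.toContinuousLinearMap).comp (gradV d α₂ (x, v))‖ ≤ _
        rw [norm_csmul]
        exact mul_le_mul_of_nonneg_left (conj_comp_norm _) (norm_nonneg _)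
      have intA₁ : Integrable fun v : E d => (starRingEnd ℂ) (α₁ (x, v)) • gradV d α₁ (x, v) := by
        apply CSint _ hcA₁ (fun v => ‖α₁ (x, v)‖) (fun v => ‖gradV d α₁ (x, v)‖)
          ((hcα₁.comp (Continuous.prodMk_right x)).norm) ((hcg₁.comp (Continuous.prodMk_right x)).norm)
          (fun v => norm_nonneg _) (fun v => norm_nonneg _) _ Fα₁ Fg₁
        intro v
        show ‖(starRingEnd ℂ) _ • _‖ ≤ _
        rw [norm_csmul, normconj]
      have intA₂ : Integrable fun v : E d => (starRingEnd ℂ) (α₂ (x, v)) • gradV d α₂ (x, v) := by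
        apply CSint _ hcA₂ (fun v => ‖α₂ (x, v)‖) (fun v => ‖gradV d α₂ (x, v)‖)
          ((hcα₂.comp (Continuous.prodMk_right x)).norm) ((hcg₂.comp (Continuous.prodMk_right x)).norm)
          (fun v => norm_nonneg _) (fun v => norm_nonneg _) _ Fα₂ Fg₂
        intro v
        show ‖(starRingEnd ℂ) _ • _‖ ≤ _
        rw [norm_csmul, normconj]
      -- the auxiliary scalar function and its derivative
      set hfun : E d → ℂ := fun v => (starRingEnd ℂ) (α₂ (x, v)) * (α₁ - α₂) (x, v) with hhfun
      have hDer : ∀ v : E d, HasFDerivAt hfun (Q v + Cc v) v := by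
        intro v
        have hc : HasFDerivAt (fun v : E d => (starRingEnd ℂ) (α₂ (x, v)))
            (Complex.conjCLE.toContinuousLinearMap.comp (gradV d α₂ (x, v))) v :=
          Complex.conjCLE.toContinuousLinearMap.hasFDerivAt.comp v (gradV_hasFDerivAt hs₂ x v)
        have hb' : HasFDerivAt (fun v : E d => (α₁ - α₂) (x, v))
            (gradV d (α₁ - α₂) (x, v)) v := gradV_hasFDerivAt hβ x v
        exact hc.mul hb'
      have hfun_cd : ContDiff ℝ 1 hfun := by
        have h1 : ContDiff ℝ 1 fun v : E d => (starRingEnd ℂ) (α₂ (x, v)) :=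
          Complex.conjCLE.toContinuousLinearMap.contDiff.comp (contDiff_slice hs₂ x)
        have h2 : ContDiff ℝ 1 fun v : E d => (α₁ - α₂) (x, v) := contDiff_slice hβ x
        exact h1.mul h2
      have inth : Integrable hfun := by
        apply CSint hfun ((hconjc.comp (hcα₂.comp (Continuous.prodMk_right x))).mul
            (hcβ.comp (Continuous.prodMk_right x)))
          (fun v => ‖α₂ (x, v)‖) (fun v => ‖(α₁ - α₂) (x, v)‖)
          ((hcα₂.comp (Continuous.prodMk_right x)).norm) ((hcβ.comp (Continuous.prodMk_right x)).norm)
          (fun v => norm_nonneg _) (fun v => norm_nonneg _) _ Fα₂ Fβ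
        intro v
        show ‖(starRingEnd ℂ) (α₂ (x, v)) * (α₁ - α₂) (x, v)‖ ≤ _
        rw [norm_mul, normconj]
      have hfderiv : (fun v : E d => fderiv ℝ hfun v) = fun v => Q v + Cc v :=
        funext fun v => (hDer v).fderiv
      have hIBP : (∫ v, Q v) = - ∫ v, Cc v := by
        have hzero2 : (∫ v, (Q v + Cc v)) = 0 := by
          rw [← hfderiv]
          exact ibp_zero hfun hfun_cd inth (by rw [hfderiv]; exact Integrable.add (ε' := E d →L[ℝ] ℂ) intQ intCc)
        rw [integral_add intQ intCc] at hzero2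
        exact eq_neg_of_add_eq_zero_left hzero2
      have hID : phaseDensity d α₁ x - phaseDensity d α₂ x = (∫ v, P v) - ∫ v, Cc v := by
        have h1 : phaseDensity d α₁ x - phaseDensity d α₂ x =
            ∫ v, ((starRingEnd ℂ) (α₁ (x, v)) • gradV d α₁ (x, v) -
              (starRingEnd ℂ) (α₂ (x, v)) • gradV d α₂ (x, v)) :=
          (integral_sub intA₁ intA₂).symm
        have h2 : (fun v : E d => ((starRingEnd ℂ) (α₁ (x, v)) • gradV d α₁ (x, v) -
            (starRingEnd ℂ) (α₂ (x, v)) • gradV d α₂ (x, v))) = fun v => P v + Q v := by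
          funext v
          have hsub : gradV d (α₁ - α₂) (x, v) = gradV d α₁ (x, v) - gradV d α₂ (x, v) :=
            gradV_sub hs₁ hs₂ x v
          have hβv : (α₁ - α₂) (x, v) = α₁ (x, v) - α₂ (x, v) := rfl
          simp only [hP, hQ, hsub, hβv, map_sub]
          module
        rw [h1, h2, integral_add intP intQ, hIBP, ← sub_eq_add_neg]
      have hPn : ENNReal.ofReal ‖∫ v, P v‖ ≤
          (∫⁻ v, ENNReal.ofReal (‖(α₁ - α₂) (x, v)‖ ^ (2 : ℝ))) ^ (1 / (2 : ℝ)) *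
            (∫⁻ v, ENNReal.ofReal (‖gradV d α₁ (x, v)‖ ^ (2 : ℝ))) ^ (1 / (2 : ℝ)) := by
        apply CSnorm P (fun v => ‖(α₁ - α₂) (x, v)‖) (fun v => ‖gradV d α₁ (x, v)‖)
          ((hcβ.comp (Continuous.prodMk_right x)).norm) ((hcg₁.comp (Continuous.prodMk_right x)).norm)
          (fun v => norm_nonneg _) (fun v => norm_nonneg _)
        intro v
        show ‖(starRingEnd ℂ) _ • _‖ ≤ _
        rw [norm_csmul, normconj]
      have hCn : ENNReal.ofReal ‖∫ v, Cc v‖ ≤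
          (∫⁻ v, ENNReal.ofReal (‖(α₁ - α₂) (x, v)‖ ^ (2 : ℝ))) ^ (1 / (2 : ℝ)) *
            (∫⁻ v, ENNReal.ofReal (‖gradV d α₂ (x, v)‖ ^ (2 : ℝ))) ^ (1 / (2 : ℝ)) := by
        apply CSnorm Cc (fun v => ‖(α₁ - α₂) (x, v)‖) (fun v => ‖gradV d α₂ (x, v)‖)
          ((hcβ.comp (Continuous.prodMk_right x)).norm) ((hcg₂.comp (Continuous.prodMk_right x)).norm)
          (fun v => norm_nonneg _) (fun v => norm_nonneg _)
        intro v
        show ‖(α₁ - α₂) (x, v) • (Complex.conjCLE.toContinuousLinearMap).comp (gradV d α₂ (x, v))‖ ≤ _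
        rw [norm_csmul]
        exact mul_le_mul_of_nonneg_left (conj_comp_norm _) (norm_nonneg _)
      have hsplit : ENNReal.ofReal ‖phaseDensity d α₁ x - phaseDensity d α₂ x‖ ≤
          (∫⁻ v, ENNReal.ofReal (‖(α₁ - α₂) (x, v)‖ ^ (2 : ℝ))) ^ (1 / (2 : ℝ)) *
            (∫⁻ v, ENNReal.ofReal (‖gradV d α₁ (x, v)‖ ^ (2 : ℝ))) ^ (1 / (2 : ℝ)) +
          (∫⁻ v, ENNReal.ofReal (‖(α₁ - α₂) (x, v)‖ ^ (2 : ℝ))) ^ (1 / (2 : ℝ)) *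
            (∫⁻ v, ENNReal.ofReal (‖gradV d α₂ (x, v)‖ ^ (2 : ℝ))) ^ (1 / (2 : ℝ)) := by
        rw [hID]
        refine le_trans (ENNReal.ofReal_le_ofReal (norm_sub_le _ _)) ?_
        exact le_trans ENNReal.ofReal_add_le (add_le_add hPn hCn)
      set ω : ℝ := (volume (Metric.ball (0 : E d) 1)).toReal with hω
      have hω0 : 0 < ω :=
        ENNReal.toReal_pos (measure_ball_pos _ _ one_pos).ne' measure_ball_lt_top.ne
      have hXne : (Anorm κ 2 (gradV d α₁) + Anorm κ 2 (gradV d α₂)) * Anorm κ 2 (α₁ - α₂) ≠ ⊤ :=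
        ENNReal.mul_ne_top (by exact ENNReal.add_ne_top.mpr ⟨hg₁.ne, hg₂.ne⟩) hβtop
      have main_r : ∀ r : {R : ℝ // 0 < R},
          ENNReal.ofReal ‖phaseDensity d α₁ x - phaseDensity d α₂ x‖ ≤
            ENNReal.ofReal ((1 + r.1) ^ κ / (ω * r.1 ^ (d : ℝ))) *
              ((Anorm κ 2 (gradV d α₁) + Anorm κ 2 (gradV d α₂)) * Anorm κ 2 (α₁ - α₂)) := by
        intro r
        set R : ℝ≥0 := r.1.toNNReal with hRdef
        have hRr : ((R : ℝ≥0) : ℝ) = r.1 := Real.coe_toNNReal _ r.2.le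
        have hRpos : (0 : ℝ) < (R : ℝ) := by rw [hRr]; exact r.2
        set C : ℝ≥0∞ :=
          ENNReal.ofReal (1 + (R : ℝ)) ^ κ / volume (Metric.ball (0 : E d) (R : ℝ)) with hCdef
        have hvol0 : volume (Metric.ball (0 : E d) (R : ℝ)) ≠ 0 :=
          (measure_ball_pos _ _ hRpos).ne'
        have hvoltop : volume (Metric.ball (0 : E d) (R : ℝ)) ≠ ⊤ := measure_ball_lt_top.ne
        have hc1 : (0 : ℝ) < 1 + (R : ℝ) := by positivity
        have hcκ0 : ENNReal.ofReal (1 + (R : ℝ)) ^ κ ≠ 0 :=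
          (ENNReal.rpow_pos (ENNReal.ofReal_pos.mpr hc1) ENNReal.ofReal_ne_top).ne'
        have hcκtop : ENNReal.ofReal (1 + (R : ℝ)) ^ κ ≠ ⊤ :=
          (ENNReal.rpow_lt_top_of_nonneg hκ0 ENNReal.ofReal_ne_top).ne
        have hC0 : C ≠ 0 := (ENNReal.div_pos hcκ0 hvoltop).ne'
        have hCtop : C ≠ ⊤ := (ENNReal.div_lt_top hcκtop hvol0).ne
        have sqrtb : ∀ {F : Type} [inst : NormedAddCommGroup F], ∀ (f : E d × E d → F),
            Continuous f →
            (∫⁻ v, ENNReal.ofReal (‖f (x, v)‖ ^ (2 : ℝ))) ^ (1 / (2 : ℝ)) ≤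
              C ^ (1 / (2 : ℝ)) * Anorm κ 2 f := by
          intro F inst f hf
          have h := lemA (κ := κ) hf x R
          rw [mul_comm] at h
          have h2 : (∫⁻ v, ENNReal.ofReal (‖f (x, v)‖ ^ (2 : ℝ))) ≤ C * Anorm κ 2 f ^ (2 : ℝ) := by
            have h3 := (ENNReal.le_div_iff_mul_le (Or.inl hvol0) (Or.inl hvoltop)).mpr h
            calc (∫⁻ v, ENNReal.ofReal (‖f (x, v)‖ ^ (2 : ℝ)))
                ≤ (ENNReal.ofReal (1 + (R : ℝ)) ^ κ * Anorm κ 2 f ^ (2 : ℝ)) /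
                  volume (Metric.ball (0 : E d) (R : ℝ)) := h3
              _ = C * Anorm κ 2 f ^ (2 : ℝ) := by
                  rw [hCdef, div_eq_mul_inv, div_eq_mul_inv, mul_right_comm]
          calc (∫⁻ v, ENNReal.ofReal (‖f (x, v)‖ ^ (2 : ℝ))) ^ (1 / (2 : ℝ))
              ≤ (C * Anorm κ 2 f ^ (2 : ℝ)) ^ (1 / (2 : ℝ)) :=
                ENNReal.rpow_le_rpow h2 (by norm_num)
            _ = C ^ (1 / (2 : ℝ)) * Anorm κ 2 f := by
                rw [ENNReal.mul_rpow_of_nonneg _ _ (by norm_num), ← ENNReal.rpow_mul,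
                  show (2 : ℝ) * (1 / 2) = 1 by norm_num, ENNReal.rpow_one]
        have hCC : C ^ (1 / (2 : ℝ)) * C ^ (1 / (2 : ℝ)) = C := by
          rw [← ENNReal.rpow_add _ _ hC0 hCtop]
          norm_num
        have hCeq : C = ENNReal.ofReal ((1 + r.1) ^ κ / (ω * r.1 ^ (d : ℝ))) := by
          haveI : Nontrivial (E d) := by
            have hfr : 0 < Module.finrank ℝ (E d) := by
              rw [finrank_euclideanSpace_fin]; omega
            exact Module.nontrivial_of_finrank_pos hfr
          have e2 : volume (Metric.ball (0 : E d) (R : ℝ)) =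
              ENNReal.ofReal (ω * r.1 ^ (d : ℝ)) := by
            rw [Measure.addHaar_ball (μ := (volume : Measure (E d))) (0 : E d) hRpos.le,
              finrank_euclideanSpace_fin, hRr]
            rw [← ENNReal.ofReal_toReal (measure_ball_lt_top.ne :
              volume (Metric.ball (0 : E d) 1) ≠ ⊤), ← hω,
              ← ENNReal.ofReal_mul (pow_nonneg r.2.le d)]
            congr 1
            rw [Real.rpow_natCast]
            ring
          rw [hCdef, e2, hRr,
            ENNReal.ofReal_rpow_of_nonneg (by linarith [r.2] : (0 : ℝ) ≤ 1 + r.1) hκ0,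
            ← ENNReal.ofReal_div_of_pos (mul_pos hω0 (Real.rpow_pos_of_pos r.2 _))]
        calc ENNReal.ofReal ‖phaseDensity d α₁ x - phaseDensity d α₂ x‖
            ≤ (∫⁻ v, ENNReal.ofReal (‖(α₁ - α₂) (x, v)‖ ^ (2 : ℝ))) ^ (1 / (2 : ℝ)) *
                (∫⁻ v, ENNReal.ofReal (‖gradV d α₁ (x, v)‖ ^ (2 : ℝ))) ^ (1 / (2 : ℝ)) +
              (∫⁻ v, ENNReal.ofReal (‖(α₁ - α₂) (x, v)‖ ^ (2 : ℝ))) ^ (1 / (2 : ℝ)) *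
                (∫⁻ v, ENNReal.ofReal (‖gradV d α₂ (x, v)‖ ^ (2 : ℝ))) ^ (1 / (2 : ℝ)) := hsplit
          _ ≤ (C ^ (1 / (2 : ℝ)) * Anorm κ 2 (α₁ - α₂)) *
                (C ^ (1 / (2 : ℝ)) * Anorm κ 2 (gradV d α₁)) +
              (C ^ (1 / (2 : ℝ)) * Anorm κ 2 (α₁ - α₂)) *
                (C ^ (1 / (2 : ℝ)) * Anorm κ 2 (gradV d α₂)) :=
              add_le_add (mul_le_mul' (sqrtb _ hcβ) (sqrtb _ hcg₁))
                (mul_le_mul' (sqrtb _ hcβ) (sqrtb _ hcg₂))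
          _ = (C ^ (1 / (2 : ℝ)) * C ^ (1 / (2 : ℝ))) *
                ((Anorm κ 2 (gradV d α₁) + Anorm κ 2 (gradV d α₂)) * Anorm κ 2 (α₁ - α₂)) := by
              ring
          _ = C * ((Anorm κ 2 (gradV d α₁) + Anorm κ 2 (gradV d α₂)) * Anorm κ 2 (α₁ - α₂)) := by
              rw [hCC]
          _ = _ := by rw [hCeq]
      have hfin := le_iInf main_r
      rw [← ENNReal.iInf_mul (fun htop _ => absurd htop hXne), ← ENNReal.ofReal_iInf] at hfin
      have hAc : Aconst d κ = ⨅ r : {R : ℝ // 0 < R}, (1 + r.1) ^ κ / (ω * r.1 ^ (d : ℝ)) := by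
        unfold Aconst
        rw [hω]
      rw [mul_assoc, hAc]
      exact hfin
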